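/- (Corollary to Theorem 6) Consider the nearest-neighbor case J(1) = 1 and J(r) = 0 for r ≥ 2 (Δ(·) and h arbitrary). Let m be an integer with 0 ≤ m ≤ 2S, set M = (S − m)L, and let ψ be a unit vector in V(M,q) attaining E(M;q). Then for every site j, ⟨ψ, S^x_j S^x_{j+1} ψ⟩ ≤ 0, where S^x_j = (S^+_j + S^-_j)/2. -/

import Mathlib

open scoped BigOperators Matrix
open Fin.NatCast
noncomputable section
set_option maxHeartbeats 1000000

namespace LSM

/-- Number of basis states per site: `2S+1`. -/
abbrev N (twoS : ℕ) : ℕ := twoS + 1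

/-- The spin value `S` as a real number (so `2S = twoS`). -/
def spin (twoS : ℕ) : ℝ := (twoS : ℝ) / 2

/-- The `S^z`-value of the `k`-th basis vector: `m = S - k`, `k = 0, …, 2S`. -/
def mval (twoS : ℕ) (k : Fin (N twoS)) : ℝ := spin twoS - (k : ℕ)

/-- Single-site `S^z` matrix. -/
def SzMat (twoS : ℕ) : Matrix (Fin (N twoS)) (Fin (N twoS)) ℂ :=
  Matrix.diagonal fun k => (mval twoS k : ℂ)

/-- Single-site raising operator `S^+`. -/
def SpMat (twoS : ℕ) : Matrix (Fin (N twoS)) (Fin (N twoS)) ℂ :=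
  Matrix.of fun a b =>
    if (a : ℕ) + 1 = (b : ℕ) then
      ((Real.sqrt (spin twoS * (spin twoS + 1) - mval twoS b * (mval twoS b + 1)) : ℝ) : ℂ)
    else 0

/-- Single-site lowering operator `S^-`. -/
def SmMat (twoS : ℕ) : Matrix (Fin (N twoS)) (Fin (N twoS)) ℂ :=
  Matrix.of fun a b =>
    if (a : ℕ) = (b : ℕ) + 1 then
      ((Real.sqrt (spin twoS * (spin twoS + 1) - mval twoS b * (mval twoS b - 1)) : ℝ) : ℂ)
    else 0

/-- Single-site `S^y = (S^+ - S^-)/(2i)`. -/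
def SyMat (twoS : ℕ) : Matrix (Fin (N twoS)) (Fin (N twoS)) ℂ :=
  ((2 : ℂ) * Complex.I)⁻¹ • (SpMat twoS - SmMat twoS)

/-- Single-site `S^x = (S^+ + S^-)/2`. -/
def SxMat (twoS : ℕ) : Matrix (Fin (N twoS)) (Fin (N twoS)) ℂ :=
  ((2 : ℂ))⁻¹ • (SpMat twoS + SmMat twoS)

/-- Configurations (product basis labels) of the chain of length `L`. -/
abbrev Conf (twoS L : ℕ) := Fin L → Fin (N twoS)

/-- Operators on the chain Hilbert space `⊗_{j=1}^L ℂ^{2S+1}`, as matrices in the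
product basis. -/
abbrev Op (twoS L : ℕ) := Matrix (Conf twoS L) (Conf twoS L) ℂ

/-- The single-site matrix `A` acting on the `j`-th tensor factor (identity elsewhere). -/
def site (twoS L : ℕ) (j : Fin L) (A : Matrix (Fin (N twoS)) (Fin (N twoS)) ℂ) :
    Op twoS L :=
  Matrix.of fun x y => if ∀ i, i ≠ j → x i = y i then A (x j) (y j) else 0

/-- Total `S^z`. -/
def SzT (twoS L : ℕ) : Op twoS L := ∑ j : Fin L, site twoS L j (SzMat twoS)

/-- Total `S^y`. -/
def SyT (twoS L : ℕ) : Op twoS L := ∑ j : Fin L, site twoS L j (SyMat twoS)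

/-- Translation by one site: the permutation matrix with
`Utrl† A_j Utrl = A_{j+1}` for every single-site operator `A`. -/
def Utrl (twoS L : ℕ) [NeZero L] : Op twoS L :=
  Matrix.of fun x y => if x = (fun i => y (i + 1)) then 1 else 0

/-- Site parity (space inversion `j ↦ L - j = -j (mod L)`): the permutation matrix with
`P† A_j P = A_{L-j}` for every single-site operator `A`. -/
def Pop (twoS L : ℕ) [NeZero L] : Op twoS L :=
  Matrix.of fun x y => if x = (fun i => y (-i)) then 1 else 0

/-- Link parity `P_link = P U_trl`. -/
def Plink (twoS L : ℕ) [NeZero L] : Op twoS L := Pop twoS L * Utrl twoS L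

/-- The generalized XXZ Hamiltonian with periodic boundary conditions. -/
def Ham (twoS L : ℕ) [NeZero L] (J Δ : ℕ → ℝ) (h : ℝ) : Op twoS L :=
  (∑ j : Fin L, ∑ r ∈ Finset.Icc 1 (L / 2),
      ((((J r : ℝ) : ℂ) / 2) •
        (site twoS L j (SpMat twoS) * site twoS L (j + (r : Fin L)) (SmMat twoS) +
          site twoS L j (SmMat twoS) * site twoS L (j + (r : Fin L)) (SpMat twoS)) +
      ((Δ r : ℝ) : ℂ) •
        (site twoS L j (SzMat twoS) * site twoS L (j + (r : Fin L)) (SzMat twoS)))) +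
    (h : ℂ) • SzT twoS L

/-- The generator `Σ_{j=1}^{L} j (S^z_j - S)` of the (site-centered) twist. -/
def twistGen (twoS L : ℕ) [NeZero L] : Op twoS L :=
  ∑ j ∈ Finset.Icc 1 L,
    (j : ℂ) • site twoS L ((j : ℕ) : Fin L) (SzMat twoS - ((spin twoS : ℝ) : ℂ) • 1)

/-- The twist operator `U^tw_{ε·2π} = exp(-ε (2πi/L) Σ_j j (S^z_j - S))`, `ε = ±1`. -/
def Utw (twoS L : ℕ) [NeZero L] (ε : ℝ) : Op twoS L :=
  NormedSpace.exp ((-(ε : ℂ) * ((2 * Real.pi / L : ℝ) : ℂ) * Complex.I) • twistGen twoS L)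

/-- The generator `Σ_{j=1}^{L} (j - 1/2)(S^z_j - S)` of the link-centered twist. -/
def twistGenL (twoS L : ℕ) [NeZero L] : Op twoS L :=
  ∑ j ∈ Finset.Icc 1 L,
    ((j : ℂ) - 1 / 2) • site twoS L ((j : ℕ) : Fin L) (SzMat twoS - ((spin twoS : ℝ) : ℂ) • 1)

/-- The link-centered twist operator `U^twl_{ε·2π}`, `ε = ±1`. -/
def UtwL (twoS L : ℕ) [NeZero L] (ε : ℝ) : Op twoS L :=
  NormedSpace.exp ((-(ε : ℂ) * ((2 * Real.pi / L : ℝ) : ℂ) * Complex.I) • twistGenL twoS L)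

/-- The spin-reversal operator `U^y_π = exp(-iπ S^y_T)`. -/
def Uy (twoS L : ℕ) : Op twoS L :=
  NormedSpace.exp ((-Complex.I * ((Real.pi : ℝ) : ℂ)) • SyT twoS L)

/-- The sector `V(M, q)` of simultaneous eigenvectors of `S^z_T` (eigenvalue `M`) and of
the translation `U_trl` (eigenvalue `e^{iq}`). -/
def Vsp (twoS L : ℕ) [NeZero L] (M q : ℝ) : Submodule ℂ (Conf twoS L → ℂ) :=
  Module.End.eigenspace (Matrix.mulVecLin (SzT twoS L)) ((M : ℝ) : ℂ) ⊓
    Module.End.eigenspace (Matrix.mulVecLin (Utrl twoS L)) (Complex.exp (Complex.I * q))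

/-- `E(M; q)`: the smallest eigenvalue of `H` restricted to the sector `V(M,q)`. -/
def En (twoS L : ℕ) [NeZero L] (J Δ : ℕ → ℝ) (h : ℝ) (M q : ℝ) : ℝ :=
  sInf {E : ℝ | ∃ ψ ∈ Vsp twoS L M q, ψ ≠ 0 ∧
    (Ham twoS L J Δ h).mulVec ψ = ((E : ℝ) : ℂ) • ψ}

/-- The expectation value `⟨ψ, A ψ⟩`. -/
def expVal (twoS L : ℕ) (A : Op twoS L) (ψ : Conf twoS L → ℂ) : ℂ :=
  dotProduct (star ψ) (A.mulVec ψ)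

/-- `q` belongs to the lattice `(2π/L)ℤ` of allowed wavenumbers. -/
def allowedQ (L : ℕ) (q : ℝ) : Prop := ∃ k : ℤ, q = 2 * Real.pi * k / L


-- ===================== auxiliary development =====================

section VariationalLemma

lemma variational_abstract {E : Type*} [NormedAddCommGroup E] [InnerProductSpace ℂ E]
    [FiniteDimensional ℂ E] (T : E →ₗ[ℂ] E) (hT : T.IsSymmetric)
    (W : Submodule ℂ E) (hinv : ∀ v ∈ W, T v ∈ W)
    (φ : E) (hφW : φ ∈ W) (hφ1 : (inner ℂ φ φ : ℂ) = 1) (S : Set ℝ)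
    (hmem : ∀ (ψ : E) (μ : ℝ), ψ ∈ W → ψ ≠ 0 → T ψ = (μ:ℂ) • ψ → μ ∈ S)
    (hbdd : BddBelow S) :
    sInf S ≤ (inner ℂ φ (T φ) : ℂ).re := by
  classical
  let g : ↥W →ₗ[ℂ] ↥W := T.restrict hinv
  have gsym : g.IsSymmetric := by
    intro u v
    have h := hT (u : E) (v : E)
    simpa only [Submodule.coe_inner, g, LinearMap.restrict_coe_apply] using h
  have hn : Module.finrank ℂ ↥W = Module.finrank ℂ ↥W := rfl
  let b := gsym.eigenvectorBasis hn
  let μ := gsym.eigenvalues hn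
  have hb : ∀ i, g (b i) = (μ i : ℂ) • b i := fun i => gsym.apply_eigenvectorBasis hn i
  have hμ : ∀ i, sInf S ≤ μ i := by
    intro i
    refine csInf_le hbdd (hmem (b i : E) (μ i) (b i).2 ?_ ?_)
    · intro h0
      exact b.toBasis.ne_zero i (by exact_mod_cast Subtype.ext h0)
    · rw [show T ((b i : E)) = ((g (b i) : E)) from rfl, hb i]
      rfl
  let v : ↥W := ⟨φ, hφW⟩
  let c := fun i => b.repr v i
  have hvrepr : ∑ i, c i • b i = v := b.sum_repr v
  have hinnerb : ∀ (w : ↥W) i, (inner ℂ w (b i) : ℂ) = starRingEnd ℂ (b.repr w i) := by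
    intro w i
    rw [b.repr_apply_apply]
    exact (inner_conj_symm w (b i)).symm
  have h1 : (inner ℂ v v : ℂ) = ∑ i, starRingEnd ℂ (c i) * c i := by
    calc (inner ℂ v v : ℂ) = inner ℂ v (∑ i, c i • b i) := by rw [hvrepr]
      _ = ∑ i, starRingEnd ℂ (c i) * c i := by
          rw [inner_sum]
          refine Finset.sum_congr rfl fun i _ => ?_
          rw [inner_smul_right, hinnerb v i]
          ring
  have h2 : (inner ℂ v (g v) : ℂ) = ∑ i, (μ i : ℂ) * (starRingEnd ℂ (c i) * c i) := by
    have hgv : g v = ∑ i, c i • ((μ i : ℂ) • b i) := by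
      calc g v = g (∑ i, c i • b i) := by rw [hvrepr]
        _ = ∑ i, c i • ((μ i : ℂ) • b i) := by
            rw [map_sum]
            exact Finset.sum_congr rfl fun i _ => by rw [map_smul, hb i]
    rw [hgv, inner_sum]
    refine Finset.sum_congr rfl fun i _ => ?_
    rw [inner_smul_right, inner_smul_right, hinnerb v i]
    ring
  have hdot1 : (inner ℂ v v : ℂ) = (inner ℂ φ φ : ℂ) := rfl
  have hdot2 : (inner ℂ v (g v) : ℂ) = (inner ℂ φ (T φ) : ℂ) := by
    have hcoe : ((g v : ↥W) : E) = T φ := rfl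
    rw [Submodule.coe_inner, hcoe]
  have hsum1 : ∑ i, Complex.normSq (c i) = 1 := by
    have h : (∑ i, (Complex.normSq (c i) : ℂ)) = 1 := by
      rw [← hφ1, ← hdot1, h1]
      exact Finset.sum_congr rfl fun i _ => by
        rw [Complex.normSq_eq_conj_mul_self]
    exact_mod_cast h
  have hre : (inner ℂ φ (T φ) : ℂ).re = ∑ i, μ i * Complex.normSq (c i) := by
    rw [← hdot2, h2, Complex.re_sum]
    refine Finset.sum_congr rfl fun i _ => ?_
    rw [show starRingEnd ℂ (c i) * c i = (Complex.normSq (c i) : ℂ) from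
      (Complex.normSq_eq_conj_mul_self).symm]
    simp [Complex.mul_re]
  rw [hre]
  calc sInf S = sInf S * ∑ i, Complex.normSq (c i) := by rw [hsum1, mul_one]
    _ = ∑ i, sInf S * Complex.normSq (c i) := by rw [Finset.mul_sum]
    _ ≤ ∑ i, μ i * Complex.normSq (c i) :=
        Finset.sum_le_sum fun i _ => mul_le_mul_of_nonneg_right (hμ i) (Complex.normSq_nonneg _)

lemma variational {ι : Type*} [Fintype ι] [DecidableEq ι] (Hm : Matrix ι ι ℂ)
    (hH : Hm.IsHermitian) (W : Submodule ℂ (ι → ℂ))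
    (hinv : ∀ v ∈ W, Hm.mulVec v ∈ W)
    (φ : ι → ℂ) (hφW : φ ∈ W) (hφ1 : dotProduct (star φ) φ = 1) :
    sInf {E : ℝ | ∃ ψ ∈ W, ψ ≠ 0 ∧ Hm.mulVec ψ = (E:ℂ) • ψ} ≤
      (dotProduct (star φ) (Hm.mulVec φ)).re := by
  classical
  set S := {E : ℝ | ∃ ψ ∈ W, ψ ≠ 0 ∧ Hm.mulVec ψ = (E:ℂ) • ψ} with hS
  have hfin : S.Finite := by
    have h1 : S ⊆ Complex.ofReal ⁻¹' (spectrum ℂ (Matrix.mulVecLin Hm)) := by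
      rintro E ⟨ψ, hψW, hψ0, hψE⟩
      have : Module.End.HasEigenvalue (Matrix.mulVecLin Hm) (E:ℂ) :=
        Module.End.hasEigenvalue_of_hasEigenvector
          ⟨Module.End.mem_eigenspace_iff.2 (by simpa [Matrix.mulVecLin_apply] using hψE), hψ0⟩
      exact Module.End.hasEigenvalue_iff_mem_spectrum.1 this
    exact (((Module.End.finite_spectrum _).preimage
      (Complex.ofReal_injective.injOn)).subset h1)
  have hbdd : BddBelow S := hfin.bddBelow
  let W' : Submodule ℂ (EuclideanSpace ℂ ι) :=
    { carrier := {v | (WithLp.equiv 2 (ι → ℂ)) v ∈ W}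
      add_mem' := fun {a b} ha hb => by
        simp only [Set.mem_setOf_eq, WithLp.equiv_apply, WithLp.ofLp_add] at *
        exact W.add_mem ha hb
      zero_mem' := by
        simp only [Set.mem_setOf_eq, WithLp.equiv_apply, WithLp.ofLp_zero]
        exact W.zero_mem
      smul_mem' := fun cc {a} ha => by
        simp only [Set.mem_setOf_eq, WithLp.equiv_apply, WithLp.ofLp_smul] at *
        exact W.smul_mem cc ha }
  have memW' : ∀ v : EuclideanSpace ℂ ι, v ∈ W' ↔ (WithLp.equiv 2 (ι → ℂ)) v ∈ W :=
    fun v => Iff.rfl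
  have hf : ∀ v : EuclideanSpace ℂ ι,
      (WithLp.equiv 2 (ι → ℂ)) (Matrix.toEuclideanLin Hm v)
        = Hm.mulVec ((WithLp.equiv 2 (ι → ℂ)) v) := fun v => rfl
  have hinv' : ∀ v ∈ W', Matrix.toEuclideanLin Hm v ∈ W' := by
    intro v hv
    rw [memW'] at hv ⊢
    rw [hf]
    exact hinv _ hv
  have hsym : (Matrix.toEuclideanLin Hm).IsSymmetric :=
    Matrix.isHermitian_iff_isSymmetric.1 hH
  have key := variational_abstract (Matrix.toEuclideanLin Hm) hsym W' hinv'
    ((WithLp.equiv 2 (ι → ℂ)).symm φ)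
    (by rw [memW']; simpa only [Equiv.apply_symm_apply] using hφW)
    (by
      rw [show (inner ℂ ((WithLp.equiv 2 (ι → ℂ)).symm φ) ((WithLp.equiv 2 (ι → ℂ)).symm φ) : ℂ)
        = dotProduct (star φ) φ from by
          rw [EuclideanSpace.inner_eq_star_dotProduct]; exact dotProduct_comm _ _]
      exact hφ1)
    S
    (by
      intro ψ μ hψW hψ0 hψE
      refine ⟨(WithLp.equiv 2 (ι → ℂ)) ψ, (memW' ψ).1 hψW, ?_, ?_⟩
      · intro h0
        apply hψ0
        apply (WithLp.equiv 2 (ι → ℂ)).injective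
        rw [h0, WithLp.equiv_apply, WithLp.ofLp_zero]
      · rw [← hf, hψE]; simp only [WithLp.equiv_apply, WithLp.ofLp_smul])
    hbdd
  have hfin2 : (inner ℂ ((WithLp.equiv 2 (ι → ℂ)).symm φ)
      ((Matrix.toEuclideanLin Hm) ((WithLp.equiv 2 (ι → ℂ)).symm φ)) : ℂ)
      = dotProduct (star φ) (Hm.mulVec φ) := by
    rw [EuclideanSpace.inner_eq_star_dotProduct]; exact dotProduct_comm _ _
  rw [hfin2] at key
  exact key

end VariationalLemma

section SiteLemmas

variable {twoS L : ℕ}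

lemma site_apply (j : Fin L) (A : Matrix (Fin (N twoS)) (Fin (N twoS)) ℂ) (x y : Conf twoS L) :
    site twoS L j A x y = if ∀ i, i ≠ j → x i = y i then A (x j) (y j) else 0 := rfl

lemma site_conjTranspose (j : Fin L) (A : Matrix (Fin (N twoS)) (Fin (N twoS)) ℂ) :
    (site twoS L j A)ᴴ = site twoS L j Aᴴ := by
  ext x y
  simp only [Matrix.conjTranspose_apply, site_apply]
  by_cases hxy : ∀ i, i ≠ j → x i = y i
  · have hyx : ∀ i, i ≠ j → y i = x i := fun i hi => (hxy i hi).symm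
    rw [if_pos hxy, if_pos hyx]
  · have hyx : ¬ ∀ i, i ≠ j → y i = x i := fun hyx => hxy fun i hi => (hyx i hi).symm
    rw [if_neg hxy, if_neg hyx, star_zero]

lemma site_add (j : Fin L) (A B : Matrix (Fin (N twoS)) (Fin (N twoS)) ℂ) :
    site twoS L j (A + B) = site twoS L j A + site twoS L j B := by
  ext x y
  simp only [site_apply, Matrix.add_apply]
  by_cases hxy : ∀ i, i ≠ j → x i = y i
  · rw [if_pos hxy, if_pos hxy, if_pos hxy]
  · rw [if_neg hxy, if_neg hxy, if_neg hxy, add_zero]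

lemma site_smul (j : Fin L) (c : ℂ) (A : Matrix (Fin (N twoS)) (Fin (N twoS)) ℂ) :
    site twoS L j (c • A) = c • site twoS L j A := by
  ext x y
  simp only [site_apply, Matrix.smul_apply, smul_eq_mul]
  by_cases hxy : ∀ i, i ≠ j → x i = y i
  · rw [if_pos hxy, if_pos hxy]
  · rw [if_neg hxy, if_neg hxy, mul_zero]

lemma site_mul_site {j k : Fin L} (hjk : j ≠ k) (A B : Matrix (Fin (N twoS)) (Fin (N twoS)) ℂ) :
    site twoS L j A * site twoS L k B =
      Matrix.of fun x y => if ∀ i, i ≠ j → i ≠ k → x i = y i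
        then A (x j) (y j) * B (x k) (y k) else 0 := by
  ext x y
  rw [Matrix.mul_apply, Matrix.of_apply]
  by_cases hc : ∀ i, i ≠ j → i ≠ k → x i = y i
  · rw [if_pos hc, Finset.sum_eq_single (Function.update x j (y j))]
    · have h1 : ∀ i, i ≠ j → x i = Function.update x j (y j) i := by
        intro i hi; rw [Function.update_of_ne hi]
      have h2 : ∀ i, i ≠ k → Function.update x j (y j) i = y i := by
        intro i hi
        by_cases hij : i = j
        · subst hij; simp
        · rw [Function.update_of_ne hij]; exact hc i hij hi
      simp only [site_apply, if_pos h1, if_pos h2, Function.update_self,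
        Function.update_of_ne (Ne.symm hjk)]
    · intro z _ hz
      by_cases h1 : ∀ i, i ≠ j → x i = z i
      · by_cases h2 : ∀ i, i ≠ k → z i = y i
        · exfalso; apply hz; funext i
          by_cases hij : i = j
          · subst hij; rw [Function.update_self]; exact h2 _ hjk
          · rw [Function.update_of_ne hij]; exact (h1 i hij).symm
        · simp [site_apply, h2]
      · simp [site_apply, h1]
    · intro h; exact absurd (Finset.mem_univ _) h
  · rw [if_neg hc, Finset.sum_eq_zero]
    intro z _
    by_cases h1 : ∀ i, i ≠ j → x i = z i
    · by_cases h2 : ∀ i, i ≠ k → z i = y i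
      · exfalso; exact hc fun i hij hik => (h1 i hij).trans (h2 i hik)
      · simp [site_apply, h2]
    · simp [site_apply, h1]

lemma site_mul_site_comm {j k : Fin L} (hjk : j ≠ k)
    (A B : Matrix (Fin (N twoS)) (Fin (N twoS)) ℂ) :
    site twoS L j A * site twoS L k B = site twoS L k B * site twoS L j A := by
  rw [site_mul_site hjk, site_mul_site (Ne.symm hjk)]
  ext x y
  simp only [Matrix.of_apply]
  by_cases hc : ∀ i, i ≠ j → i ≠ k → x i = y i
  · have hc' : ∀ i, i ≠ k → i ≠ j → x i = y i := fun i h1 h2 => hc i h2 h1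
    rw [if_pos hc, if_pos hc', mul_comm]
  · have hc' : ¬ ∀ i, i ≠ k → i ≠ j → x i = y i :=
      fun hh => hc fun i h1 h2 => hh i h2 h1
    rw [if_neg hc, if_neg hc']

lemma site_diagonal (j : Fin L) (d : Fin (N twoS) → ℂ) :
    site twoS L j (Matrix.diagonal d) = Matrix.diagonal (fun x : Conf twoS L => d (x j)) := by
  ext x y
  simp only [site_apply, Matrix.diagonal_apply]
  by_cases hxy : x = y
  · subst hxy; simp
  · rw [if_neg hxy]
    by_cases hc : ∀ i, i ≠ j → x i = y i
    · rw [if_pos hc, if_neg]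
      intro hxj
      apply hxy
      funext i
      by_cases hij : i = j
      · subst hij; exact hxj
      · exact hc i hij
    · rw [if_neg hc]

lemma SpMat_conjTranspose : (SpMat twoS)ᴴ = SmMat twoS := by
  ext a b
  simp only [Matrix.conjTranspose_apply, SpMat, SmMat, Matrix.of_apply]
  by_cases h : (a : ℕ) = (b : ℕ) + 1
  · rw [if_pos h.symm, if_pos h, Complex.star_def, Complex.conj_ofReal]
    have hm : mval twoS a = mval twoS b - 1 := by
      simp only [mval, h]; push_cast; ring
    have harg : spin twoS * (spin twoS + 1) -
        (mval twoS b - 1) * ((mval twoS b - 1) + 1) =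
        spin twoS * (spin twoS + 1) - mval twoS b * (mval twoS b - 1) := by ring
    rw [hm, harg]
  · rw [if_neg (fun hh => h hh.symm), if_neg h, star_zero]

lemma SmMat_conjTranspose : (SmMat twoS)ᴴ = SpMat twoS := by
  rw [← SpMat_conjTranspose, Matrix.conjTranspose_conjTranspose]

lemma SpMat_ne {a b : Fin (N twoS)} (h : SpMat twoS a b ≠ 0) : (a : ℕ) + 1 = (b : ℕ) := by
  by_contra hne
  exact h (by rw [SpMat, Matrix.of_apply, if_neg hne])

lemma SmMat_ne {a b : Fin (N twoS)} (h : SmMat twoS a b ≠ 0) : (a : ℕ) = (b : ℕ) + 1 := by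
  by_contra hne
  exact h (by rw [SmMat, Matrix.of_apply, if_neg hne])

lemma site_mul_site_entry {j k : Fin L} (hjk : j ≠ k)
    {A B : Matrix (Fin (N twoS)) (Fin (N twoS)) ℂ} {x y : Conf twoS L}
    (h : (site twoS L j A * site twoS L k B) x y ≠ 0) :
    (∀ i, i ≠ j → i ≠ k → x i = y i) ∧ A (x j) (y j) ≠ 0 ∧ B (x k) (y k) ≠ 0 := by
  rw [site_mul_site hjk, Matrix.of_apply] at h
  by_cases hc : ∀ i, i ≠ j → i ≠ k → x i = y i
  · rw [if_pos hc] at h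
    exact ⟨hc, mul_ne_zero_iff.1 h⟩
  · rw [if_neg hc] at h
    exact absurd rfl h

end SiteLemmas

section DiagLemmas

variable {twoS L : ℕ}

/-- The diagonal entries of the total `S^z`. -/
def szdf (twoS L : ℕ) : Conf twoS L → ℂ := fun x => ∑ j, (mval twoS (x j) : ℂ)

/-- The sum of the basis indices of a configuration. -/
def confSum (x : Conf twoS L) : ℕ := ∑ i, (x i : ℕ)

lemma SzT_diag : SzT twoS L = Matrix.diagonal (szdf twoS L) := by
  unfold SzT SzMat
  ext x y
  rw [Matrix.sum_apply]
  simp only [site_diagonal, Matrix.diagonal_apply]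
  by_cases hxy : x = y
  · subst hxy; simp [szdf]
  · simp [hxy]

lemma szdf_cast (x : Conf twoS L) :
    szdf twoS L x = (((L : ℝ) * spin twoS - (confSum x : ℝ) : ℝ) : ℂ) := by
  have h1 : ∀ j : Fin L, ((mval twoS (x j) : ℝ) : ℂ)
      = ((spin twoS : ℝ) : ℂ) - ((x j : ℕ) : ℂ) := by
    intro j; rw [mval]; push_cast; ring
  rw [szdf, Finset.sum_congr rfl fun j _ => h1 j, Finset.sum_sub_distrib,
    Finset.sum_const, Finset.card_univ, Fintype.card_fin, confSum]
  push_cast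
  ring

lemma szdf_eq_of_confSum {x y : Conf twoS L} (h : confSum x = confSum y) :
    szdf twoS L x = szdf twoS L y := by
  rw [szdf_cast, szdf_cast, h]

lemma diagonal_mul_comm (d : Conf twoS L → ℂ) (A : Op twoS L)
    (h : ∀ x y, A x y ≠ 0 → d x = d y) :
    Matrix.diagonal d * A = A * Matrix.diagonal d := by
  ext x y
  rw [Matrix.diagonal_mul, Matrix.mul_diagonal]
  by_cases hA : A x y = 0
  · rw [hA, mul_zero, zero_mul]
  · rw [h x y hA, mul_comm]

lemma confSum_PM {j k : Fin L} {x y : Conf twoS L} (hjk : j ≠ k)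
    (hoff : ∀ i, i ≠ j → i ≠ k → x i = y i)
    (hj : (x j : ℕ) + 1 = (y j : ℕ)) (hk : (x k : ℕ) = (y k : ℕ) + 1) :
    confSum x = confSum y := by
  have key : ∀ i, ((x i : ℕ) + (if i = j then 1 else 0))
      = ((y i : ℕ) + (if i = k then 1 else 0)) := by
    intro i
    by_cases hij : i = j
    · subst hij; rw [if_pos rfl, if_neg hjk, hj, add_zero]
    · by_cases hik : i = k
      · subst hik; rw [if_neg hij, if_pos rfl, add_zero, hk]
      · rw [if_neg hij, if_neg hik, hoff i hij hik]
  have hsum := Finset.sum_congr rfl (fun i (_ : i ∈ Finset.univ) => key i)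
  rw [Finset.sum_add_distrib, Finset.sum_add_distrib, Finset.sum_ite_eq' Finset.univ j,
    Finset.sum_ite_eq' Finset.univ k] at hsum
  simpa [confSum] using hsum

lemma confSum_PP {j k : Fin L} {x y : Conf twoS L} (hjk : j ≠ k)
    (hoff : ∀ i, i ≠ j → i ≠ k → x i = y i)
    (hj : (x j : ℕ) + 1 = (y j : ℕ)) (hk : (x k : ℕ) + 1 = (y k : ℕ)) :
    confSum x + 2 = confSum y := by
  have key : ∀ i, ((x i : ℕ) + ((if i = j then 1 else 0) + (if i = k then 1 else 0)))
      = (y i : ℕ) := by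
    intro i
    by_cases hij : i = j
    · subst hij; rw [if_pos rfl, if_neg hjk, add_zero, hj]
    · by_cases hik : i = k
      · subst hik; rw [if_neg hij, if_pos rfl, zero_add, hk]
      · rw [if_neg hij, if_neg hik, add_zero, add_zero, hoff i hij hik]
  have hsum := Finset.sum_congr rfl (fun i (_ : i ∈ Finset.univ) => key i)
  rw [Finset.sum_add_distrib, Finset.sum_add_distrib, Finset.sum_ite_eq' Finset.univ j,
    Finset.sum_ite_eq' Finset.univ k] at hsum
  simpa [confSum] using hsum

end DiagLemmas

section ParityLemmas

variable {twoS L : ℕ}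

/-- The twist exponent `Σ_i i · k_i`. -/
def eIdx (x : Conf twoS L) : ℕ := ∑ i : Fin L, (i : ℕ) * (x i : ℕ)

/-- The staggered sign `(-1)^{Σ_i i k_i}`. -/
def sgn (x : Conf twoS L) : ℂ := (-1 : ℂ) ^ (eIdx x)

lemma zmod2_add_self (a : ZMod 2) : a + a = 0 := by
  rw [← two_mul, show (2 : ZMod 2) = 0 from rfl, zero_mul]

lemma neg_one_pow_congr {a b : ℕ} (h : (a : ZMod 2) = (b : ZMod 2)) :
    ((-1 : ℂ)) ^ a = (-1) ^ b := by
  have hmod : a % 2 = b % 2 := (ZMod.natCast_eq_natCast_iff' a b 2).1 h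
  conv_lhs => rw [← Nat.div_add_mod a 2]
  conv_rhs => rw [← Nat.div_add_mod b 2]
  rw [pow_add, pow_add, pow_mul, pow_mul, neg_one_sq, one_pow, one_pow, hmod]

lemma sgn_conj (x : Conf twoS L) : (starRingEnd ℂ) (sgn x) = sgn x := by
  unfold sgn
  rw [map_pow]
  norm_num

lemma sgn_sq (x : Conf twoS L) : sgn x * sgn x = 1 := by
  unfold sgn
  rw [← mul_pow]
  norm_num

lemma natCast_mod_two {L : ℕ} (a : ℕ) (hL2 : ((L : ℕ) : ZMod 2) = 0) :
    ((a % L : ℕ) : ZMod 2) = (a : ZMod 2) := by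
  conv_rhs => rw [← Nat.mod_add_div a L]
  push_cast
  rw [hL2]
  ring

lemma even_cast_zmod2 (hLe : Even L) : ((L : ℕ) : ZMod 2) = 0 := by
  obtain ⟨c, hc⟩ := hLe
  subst hc
  push_cast
  rw [show ((c : ZMod 2) + c) = 0 from zmod2_add_self c]

lemma val_one_fin (hL2 : 2 ≤ L) [NeZero L] : ((1 : Fin L) : ℕ) = 1 := by
  rw [Fin.val_one']
  exact Nat.mod_eq_of_lt (by omega)

lemma val_add_one_zmod2 [NeZero L] (hLe : Even L) (hL2 : 2 ≤ L) (i : Fin L) :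
    (((i + 1 : Fin L) : ℕ) : ZMod 2) = ((i : ℕ) : ZMod 2) + 1 := by
  have h0 : ((i + 1 : Fin L) : ℕ) = ((i : ℕ) + 1) % L := by
    rw [Fin.add_def, val_one_fin hL2]
  rw [h0, natCast_mod_two _ (even_cast_zmod2 hLe)]
  push_cast
  ring

lemma fin_add_one_ne (hL2 : 2 ≤ L) [NeZero L] (j : Fin L) : j ≠ j + 1 := by
  intro h
  have h1 : ((j + 1 : Fin L) : ℕ) = ((j : ℕ) + 1) % L := by
    rw [Fin.add_def, val_one_fin hL2]
  have h2 : ((j + 1 : Fin L) : ℕ) = (j : ℕ) := by rw [← h]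
  have hj : (j : ℕ) < L := j.2
  rcases Nat.lt_or_ge ((j : ℕ) + 1) L with hlt | hge
  · rw [Nat.mod_eq_of_lt hlt] at h1; omega
  · have heq : (j : ℕ) + 1 = L := by omega
    rw [heq, Nat.mod_self] at h1; omega

lemma eIdx_parity {j k : Fin L} {x y : Conf twoS L} (hjk : j ≠ k)
    (hoff : ∀ i, i ≠ j → i ≠ k → x i = y i)
    (hj : (x j : ℕ) + 1 = (y j : ℕ)) (hk : (x k : ℕ) = (y k : ℕ) + 1) :
    ((eIdx x + eIdx y : ℕ) : ZMod 2) = ((j : ℕ) : ZMod 2) + ((k : ℕ) : ZMod 2) := by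
  have hstep : ((eIdx x + eIdx y : ℕ) : ZMod 2)
      = ∑ i : Fin L, ((i : ℕ) : ZMod 2) * (((x i : ℕ) : ZMod 2) + ((y i : ℕ) : ZMod 2)) := by
    unfold eIdx
    push_cast
    rw [← Finset.sum_add_distrib]
    exact Finset.sum_congr rfl fun i _ => by ring
  rw [hstep]
  have hterm : ∀ i : Fin L, ((i : ℕ) : ZMod 2) * (((x i : ℕ) : ZMod 2) + ((y i : ℕ) : ZMod 2))
      = (if i = j then ((j : ℕ) : ZMod 2) else 0) + (if i = k then ((k : ℕ) : ZMod 2) else 0) := by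
    intro i
    by_cases hij : i = j
    · subst hij
      rw [if_pos rfl, if_neg hjk, add_zero]
      have hy : ((y i : ℕ) : ZMod 2) = ((x i : ℕ) : ZMod 2) + 1 := by
        rw [← hj]; push_cast; ring
      rw [hy, show ((x i : ℕ) : ZMod 2) + (((x i : ℕ) : ZMod 2) + 1)
        = (((x i : ℕ) : ZMod 2) + ((x i : ℕ) : ZMod 2)) + 1 from by ring,
        zmod2_add_self, zero_add, mul_one]
    · by_cases hik : i = k
      · subst hik
        rw [if_neg hij, if_pos rfl, zero_add]
        have hx : ((x i : ℕ) : ZMod 2) = ((y i : ℕ) : ZMod 2) + 1 := by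
          rw [hk]; push_cast; ring
        rw [hx, show (((y i : ℕ) : ZMod 2) + 1) + ((y i : ℕ) : ZMod 2)
          = (((y i : ℕ) : ZMod 2) + ((y i : ℕ) : ZMod 2)) + 1 from by ring,
          zmod2_add_self, zero_add, mul_one]
      · rw [if_neg hij, if_neg hik, add_zero, hoff i hij hik, zmod2_add_self, mul_zero]
  rw [Finset.sum_congr rfl fun i _ => hterm i, Finset.sum_add_distrib,
    Finset.sum_ite_eq' Finset.univ j, Finset.sum_ite_eq' Finset.univ k]
  simp

lemma sgn_mul_sgn_of_parity {x y : Conf twoS L}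
    (h : ((eIdx x + eIdx y : ℕ) : ZMod 2) = 1) :
    sgn x * sgn y = -1 := by
  unfold sgn
  rw [← pow_add]
  rw [neg_one_pow_congr (b := 1) (by rw [h]; norm_num), pow_one]

end ParityLemmas

section UtrlLemmas

variable {twoS L : ℕ} [NeZero L]

/-- Forward shift on configurations. -/
def shf (x : Conf twoS L) : Conf twoS L := fun i => x (i + 1)

/-- Inverse shift on configurations. -/
def shfInv (x : Conf twoS L) : Conf twoS L := fun i => x (i - 1)

lemma shf_shfInv (x : Conf twoS L) : shf (shfInv x) = x := by
  funext i
  simp [shf, shfInv]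

lemma shfInv_shf (x : Conf twoS L) : shfInv (shf x) = x := by
  funext i
  simp [shf, shfInv]

lemma Utrl_apply (x y : Conf twoS L) :
    Utrl twoS L x y = if x = shf y then 1 else 0 := rfl

lemma Utrl_mulVec (v : Conf twoS L → ℂ) :
    (Utrl twoS L).mulVec v = fun x => v (shfInv x) := by
  funext x
  unfold Matrix.mulVec dotProduct
  rw [Finset.sum_eq_single (shfInv x)]
  · show Utrl twoS L x (shfInv x) * v (shfInv x) = v (shfInv x)
    rw [Utrl_apply, if_pos (shf_shfInv x).symm, one_mul]
  · intro z _ hz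
    show Utrl twoS L x z * v z = 0
    rw [Utrl_apply, if_neg, zero_mul]
    intro hxz
    exact hz (by rw [hxz, shfInv_shf])
  · intro h; exact absurd (Finset.mem_univ _) h

lemma Utrl_conjT_mul : (Utrl twoS L)ᴴ * Utrl twoS L = 1 := by
  ext x y
  rw [Matrix.mul_apply]
  by_cases hxy : x = y
  · subst hxy
    rw [Finset.sum_eq_single (shf x)]
    · simp [Matrix.conjTranspose_apply, Utrl_apply, Matrix.one_apply]
    · intro z _ hz
      rw [Matrix.conjTranspose_apply, Utrl_apply, if_neg (fun hh => hz hh)]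
      simp
    · intro h; exact absurd (Finset.mem_univ _) h
  · rw [Finset.sum_eq_zero, Matrix.one_apply_ne hxy]
    intro z _
    rw [Matrix.conjTranspose_apply, Utrl_apply, Utrl_apply]
    by_cases h1 : z = shf x
    · have h2 : z ≠ shf y := by
        intro h2
        apply hxy
        funext i
        have h3 := congrFun (h1.symm.trans h2) (i - 1)
        have h4 : i - 1 + 1 = i := by abel
        rw [show shf x (i - 1) = x (i - 1 + 1) from rfl,
          show shf y (i - 1) = y (i - 1 + 1) from rfl, h4] at h3
        exact h3
      rw [if_neg h2, mul_zero]
    · rw [if_neg h1, star_zero, zero_mul]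

lemma Utrl_mul_site (j : Fin L) (A : Matrix (Fin (N twoS)) (Fin (N twoS)) ℂ) :
    Utrl twoS L * site twoS L j A = site twoS L (j - 1) A * Utrl twoS L := by
  ext x y
  rw [Matrix.mul_apply, Matrix.mul_apply]
  rw [Finset.sum_eq_single (shfInv x), Finset.sum_eq_single (shf y)]
  · rw [Utrl_apply, if_pos (shf_shfInv x).symm, one_mul, Utrl_apply,
      if_pos rfl, mul_one]
    simp only [site_apply]
    have hval1 : shfInv x j = x (j - 1) := rfl
    have hval2 : shf y (j - 1) = y (j - 1 + 1) := rfl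
    have hiff : (∀ i, i ≠ j → shfInv x i = y i) ↔ (∀ i, i ≠ j - 1 → x i = shf y i) := by
      constructor
      · intro hc i hi
        have : i + 1 ≠ j := fun h => hi (by rw [← h]; abel)
        have := hc (i + 1) this
        simpa [shfInv, shf, add_sub_cancel_right] using this
      · intro hc i hi
        have : i - 1 ≠ j - 1 := fun h => hi (by
          have := congrArg (· + 1) h
          simpa [sub_add_cancel] using this)
        have := hc (i - 1) this
        simpa [shfInv, shf, sub_add_cancel] using this
    by_cases hc : ∀ i, i ≠ j → shfInv x i = y i
    · rw [if_pos hc, if_pos (hiff.1 hc), hval1, hval2, sub_add_cancel]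
    · rw [if_neg hc, if_neg (fun hh => hc (hiff.2 hh))]
  · intro z _ hz
    rw [Utrl_apply, if_neg (fun hh => hz hh), mul_zero]
  · intro h; exact absurd (Finset.mem_univ _) h
  · intro z _ hz
    rw [Utrl_apply, if_neg, zero_mul]
    intro hxz
    exact hz (by rw [hxz, shfInv_shf])
  · intro h; exact absurd (Finset.mem_univ _) h

lemma Utrl_mul_diagonal (d : Conf twoS L → ℂ) (hd : ∀ y, d (shf y) = d y) :
    Utrl twoS L * Matrix.diagonal d = Matrix.diagonal d * Utrl twoS L := by
  ext x y
  rw [Matrix.mul_diagonal, Matrix.diagonal_mul, Utrl_apply]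
  by_cases h : x = shf y
  · rw [if_pos h, h, hd y, mul_comm]
  · rw [if_neg h, mul_zero, zero_mul]

end UtrlLemmas

section HamLemmas

variable {twoS L : ℕ} [NeZero L]

/-- Nearest-neighbor hopping term at bond `(j, j+1)`. -/
def hop (twoS L : ℕ) [NeZero L] (j : Fin L) : Op twoS L :=
  site twoS L j (SpMat twoS) * site twoS L (j + 1) (SmMat twoS) +
  site twoS L j (SmMat twoS) * site twoS L (j + 1) (SpMat twoS)

/-- Diagonal part of the Hamiltonian. -/
def dDiag (twoS L : ℕ) [NeZero L] (Δ : ℕ → ℝ) (h : ℝ) : Conf twoS L → ℂ := fun x =>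
  (∑ j : Fin L, ∑ r ∈ Finset.Icc 1 (L / 2),
    ((Δ r : ℝ) : ℂ) * ((mval twoS (x j) : ℂ) * (mval twoS (x (j + (r : Fin L))) : ℂ))) +
  (h : ℂ) * szdf twoS L x

lemma sz_prod_diag (j k : Fin L) :
    site twoS L j (SzMat twoS) * site twoS L k (SzMat twoS) =
      Matrix.diagonal (fun x : Conf twoS L => (mval twoS (x j) : ℂ) * (mval twoS (x k) : ℂ)) := by
  rw [SzMat, site_diagonal, site_diagonal, Matrix.diagonal_mul_diagonal]

lemma Ham_eq (hL4 : 4 ≤ L) (J Δ : ℕ → ℝ) (h : ℝ)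
    (hJ1 : J 1 = 1) (hJr : ∀ r : ℕ, 2 ≤ r → J r = 0) :
    Ham twoS L J Δ h = (2⁻¹ : ℂ) • (∑ j : Fin L, hop twoS L j) +
      Matrix.diagonal (dDiag twoS L Δ h) := by
  have hmem1 : (1 : ℕ) ∈ Finset.Icc 1 (L / 2) := Finset.mem_Icc.mpr ⟨le_refl 1, by omega⟩
  unfold Ham
  have hsplit : ∀ j : Fin L, (∑ r ∈ Finset.Icc 1 (L / 2),
      ((((J r : ℝ) : ℂ) / 2) •
        (site twoS L j (SpMat twoS) * site twoS L (j + (r : Fin L)) (SmMat twoS) +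
          site twoS L j (SmMat twoS) * site twoS L (j + (r : Fin L)) (SpMat twoS)) +
      ((Δ r : ℝ) : ℂ) •
        (site twoS L j (SzMat twoS) * site twoS L (j + (r : Fin L)) (SzMat twoS))))
      = (2⁻¹ : ℂ) • hop twoS L j +
        ∑ r ∈ Finset.Icc 1 (L / 2), ((Δ r : ℝ) : ℂ) •
          (site twoS L j (SzMat twoS) * site twoS L (j + (r : Fin L)) (SzMat twoS)) := by
    intro j
    rw [Finset.sum_add_distrib]
    congr 1
    rw [Finset.sum_eq_single_of_mem 1 hmem1]
    · rw [hJ1, hop]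
      norm_num
    · intro r hr hne
      have : 2 ≤ r := by
        rcases Finset.mem_Icc.1 hr with ⟨h1, _⟩
        omega
      rw [hJr r this]
      norm_num
  rw [Finset.sum_congr rfl fun j _ => hsplit j, Finset.sum_add_distrib, ← Finset.smul_sum]
  have hdiagpart : (∑ j : Fin L, ∑ r ∈ Finset.Icc 1 (L / 2), ((Δ r : ℝ) : ℂ) •
      (site twoS L j (SzMat twoS) * site twoS L (j + (r : Fin L)) (SzMat twoS)))
      + (h : ℂ) • SzT twoS L = Matrix.diagonal (dDiag twoS L Δ h) := by
    rw [SzT_diag]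
    ext x y
    simp only [Matrix.add_apply, Matrix.sum_apply, sz_prod_diag, Matrix.smul_apply,
      Matrix.diagonal_apply, smul_eq_mul]
    by_cases hxy : x = y
    · subst hxy
      simp only [if_true, eq_self_iff_true, if_pos rfl]
      rfl
    · simp [hxy]
  rw [add_assoc, hdiagpart]

lemma hop_entry_confSum (hL2 : 2 ≤ L) (j : Fin L) {x y : Conf twoS L}
    (h : hop twoS L j x y ≠ 0) : confSum x = confSum y := by
  have hjk : j ≠ j + 1 := fin_add_one_ne hL2 j
  have hcases : (site twoS L j (SpMat twoS) * site twoS L (j + 1) (SmMat twoS)) x y ≠ 0 ∨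
      (site twoS L j (SmMat twoS) * site twoS L (j + 1) (SpMat twoS)) x y ≠ 0 := by
    by_contra hboth
    push_neg at hboth
    exact h (by rw [hop, Matrix.add_apply, hboth.1, hboth.2, add_zero])
  rcases hcases with hP | hM
  · obtain ⟨hoff, hA, hB⟩ := site_mul_site_entry hjk hP
    exact confSum_PM hjk hoff (SpMat_ne hA) (SmMat_ne hB)
  · obtain ⟨hoff, hA, hB⟩ := site_mul_site_entry hjk hM
    exact (confSum_PM hjk (fun i h1 h2 => (hoff i h1 h2).symm)
      (by rw [← SmMat_ne hA]) (by rw [SpMat_ne hB])).symm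

lemma sgn_hop (hLe : Even L) (hL2 : 2 ≤ L) (j : Fin L) (x y : Conf twoS L) :
    sgn x * hop twoS L j x y * sgn y = (-1) * hop twoS L j x y := by
  have hjk : j ≠ j + 1 := fin_add_one_ne hL2 j
  have hparity : ∀ {u v : Conf twoS L}, (∀ i, i ≠ j → i ≠ j + 1 → u i = v i) →
      ((u j : ℕ) + 1 = (v j : ℕ)) → ((u (j + 1) : ℕ) = (v (j + 1) : ℕ) + 1) →
      sgn u * sgn v = -1 := by
    intro u v hoff hj hk
    apply sgn_mul_sgn_of_parity
    rw [eIdx_parity hjk hoff hj hk, val_add_one_zmod2 hLe hL2,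
      show ((j : ℕ) : ZMod 2) + (((j : ℕ) : ZMod 2) + 1)
        = (((j : ℕ) : ZMod 2) + ((j : ℕ) : ZMod 2)) + 1 from by ring,
      zmod2_add_self, zero_add]
  by_cases h : hop twoS L j x y = 0
  · rw [h]; ring
  have hcases : (site twoS L j (SpMat twoS) * site twoS L (j + 1) (SmMat twoS)) x y ≠ 0 ∨
      (site twoS L j (SmMat twoS) * site twoS L (j + 1) (SpMat twoS)) x y ≠ 0 := by
    by_contra hboth
    push_neg at hboth
    exact h (by rw [hop, Matrix.add_apply, hboth.1, hboth.2, add_zero])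
  have hsgn : sgn x * sgn y = -1 := by
    rcases hcases with hP | hM
    · obtain ⟨hoff, hA, hB⟩ := site_mul_site_entry hjk hP
      exact hparity hoff (SpMat_ne hA) (SmMat_ne hB)
    · obtain ⟨hoff, hA, hB⟩ := site_mul_site_entry hjk hM
      rw [mul_comm]
      exact hparity (fun i h1 h2 => (hoff i h1 h2).symm)
        (by rw [← SmMat_ne hA]) (by rw [SpMat_ne hB])
  linear_combination (hop twoS L j x y) * hsgn

lemma Utrl_mul_hop (j : Fin L) :
    Utrl twoS L * hop twoS L j = hop twoS L (j - 1) * Utrl twoS L := by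
  rw [hop, hop, mul_add, add_mul]
  congr 1
  · rw [← mul_assoc, Utrl_mul_site, mul_assoc, Utrl_mul_site, ← mul_assoc,
      show j + 1 - 1 = j from by abel, show j - 1 + 1 = j from by abel]
  · rw [← mul_assoc, Utrl_mul_site, mul_assoc, Utrl_mul_site, ← mul_assoc,
      show j + 1 - 1 = j from by abel, show j - 1 + 1 = j from by abel]

lemma hop_conjTranspose (hL2 : 2 ≤ L) (j : Fin L) :
    (hop twoS L j)ᴴ = hop twoS L j := by
  have hjk : j ≠ j + 1 := fin_add_one_ne hL2 j
  rw [hop, Matrix.conjTranspose_add, Matrix.conjTranspose_mul, Matrix.conjTranspose_mul,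
    site_conjTranspose, site_conjTranspose, site_conjTranspose, site_conjTranspose,
    SpMat_conjTranspose, SmMat_conjTranspose,
    site_mul_site_comm (Ne.symm hjk), site_mul_site_comm (Ne.symm hjk)]
  rw [add_comm]

lemma dDiag_conj (Δ : ℕ → ℝ) (h : ℝ) (x : Conf twoS L) :
    (starRingEnd ℂ) (dDiag twoS L Δ h x) = dDiag twoS L Δ h x := by
  simp [dDiag, szdf, map_sum, map_mul, Complex.conj_ofReal]

lemma dDiag_shift (Δ : ℕ → ℝ) (h : ℝ) (x : Conf twoS L) :
    dDiag twoS L Δ h (shf x) = dDiag twoS L Δ h x := by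
  unfold dDiag szdf
  have hL : ∀ j : Fin L, (∑ r ∈ Finset.Icc 1 (L / 2), ((Δ r : ℝ) : ℂ) *
      ((mval twoS (shf x j) : ℂ) * (mval twoS (shf x (j + (r : Fin L))) : ℂ)))
      = ∑ r ∈ Finset.Icc 1 (L / 2), ((Δ r : ℝ) : ℂ) *
      ((mval twoS (x (j + 1)) : ℂ) * (mval twoS (x ((j + 1) + (r : Fin L))) : ℂ)) := by
    intro j
    refine Finset.sum_congr rfl fun r _ => ?_
    have harg : (j + (r : Fin L)) + 1 = (j + 1) + (r : Fin L) := by abel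
    rw [show shf x j = x (j + 1) from rfl,
      show shf x (j + (r : Fin L)) = x ((j + (r : Fin L)) + 1) from rfl, harg]
  congr 1
  · rw [Finset.sum_congr rfl fun j _ => hL j]
    exact Fintype.sum_equiv (Equiv.addRight (1 : Fin L))
      (fun j => ∑ r ∈ Finset.Icc 1 (L / 2), ((Δ r : ℝ) : ℂ) *
        ((mval twoS (x (j + 1)) : ℂ) * (mval twoS (x ((j + 1) + (r : Fin L))) : ℂ)))
      (fun j => ∑ r ∈ Finset.Icc 1 (L / 2), ((Δ r : ℝ) : ℂ) *
        ((mval twoS (x j) : ℂ) * (mval twoS (x (j + (r : Fin L))) : ℂ)))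
      (fun j => rfl)
  · congr 1
    exact Fintype.sum_equiv (Equiv.addRight (1 : Fin L))
      (fun j => (mval twoS (shf x j) : ℂ))
      (fun j => (mval twoS (x j) : ℂ))
      (fun j => rfl)

end HamLemmas

section ExpValLemmas

variable {twoS L : ℕ}

lemma expVal_eq_sum (A : Op twoS L) (ψ : Conf twoS L → ℂ) :
    expVal twoS L A ψ = ∑ x, ∑ y, (starRingEnd ℂ) (ψ x) * (A x y * ψ y) := by
  unfold expVal dotProduct Matrix.mulVec dotProduct
  refine Finset.sum_congr rfl fun x _ => ?_
  rw [Finset.mul_sum]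
  rfl

lemma expVal_add (A B : Op twoS L) (ψ : Conf twoS L → ℂ) :
    expVal twoS L (A + B) ψ = expVal twoS L A ψ + expVal twoS L B ψ := by
  unfold expVal
  rw [Matrix.add_mulVec, dotProduct_add]

lemma expVal_smul (c : ℂ) (A : Op twoS L) (ψ : Conf twoS L → ℂ) :
    expVal twoS L (c • A) ψ = c * expVal twoS L A ψ := by
  unfold expVal
  rw [Matrix.smul_mulVec, dotProduct_smul, smul_eq_mul]

lemma expVal_zero (ψ : Conf twoS L → ℂ) : expVal twoS L 0 ψ = 0 := by
  unfold expVal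
  rw [Matrix.zero_mulVec, dotProduct_zero]

lemma expVal_sum {α : Type*} (s : Finset α) (f : α → Op twoS L) (ψ : Conf twoS L → ℂ) :
    expVal twoS L (∑ a ∈ s, f a) ψ = ∑ a ∈ s, expVal twoS L (f a) ψ := by
  classical
  induction s using Finset.induction with
  | empty => simp [expVal_zero]
  | insert _ _ hnot ih =>
    rw [Finset.sum_insert hnot, Finset.sum_insert hnot, expVal_add, ih]

lemma expVal_twist (A : Op twoS L) (c : ℂ)
    (hA : ∀ x y, sgn x * A x y * sgn y = c * A x y) (ψ : Conf twoS L → ℂ) :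
    expVal twoS L A (fun x => sgn x * ψ x) = c * expVal twoS L A ψ := by
  rw [expVal_eq_sum, expVal_eq_sum, Finset.mul_sum]
  refine Finset.sum_congr rfl fun x _ => ?_
  rw [Finset.mul_sum]
  refine Finset.sum_congr rfl fun y _ => ?_
  rw [map_mul, sgn_conj]
  linear_combination ((starRingEnd ℂ) (ψ x) * ψ y) * hA x y

end ExpValLemmas



section Assembly

variable {twoS L : ℕ} [NeZero L]

lemma mem_Vsp_iff {M q : ℝ} {ψ : Conf twoS L → ℂ} :
    ψ ∈ Vsp twoS L M q ↔ (SzT twoS L).mulVec ψ = ((M : ℝ) : ℂ) • ψ ∧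
      (Utrl twoS L).mulVec ψ = Complex.exp (Complex.I * q) • ψ := by
  unfold Vsp
  rw [Submodule.mem_inf]
  simp only [Module.End.mem_eigenspace_iff, Matrix.mulVecLin_apply]

lemma Ham_isHermitian (hL4 : 4 ≤ L) (J Δ : ℕ → ℝ) (h : ℝ)
    (hJ1 : J 1 = 1) (hJr : ∀ r : ℕ, 2 ≤ r → J r = 0) :
    (Ham twoS L J Δ h).IsHermitian := by
  show _ᴴ = _
  rw [Ham_eq hL4 J Δ h hJ1 hJr, Matrix.conjTranspose_add, Matrix.conjTranspose_smul,
    Matrix.diagonal_conjTranspose]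
  congr 1
  · rw [Matrix.conjTranspose_sum]
    rw [Finset.sum_congr rfl fun j _ => hop_conjTranspose (by omega) j]
    congr 1
    norm_num
  · have hst : star (dDiag twoS L Δ h) = dDiag twoS L Δ h := by
      funext x
      rw [Pi.star_apply]
      exact dDiag_conj Δ h x
    rw [hst]

lemma SzT_comm_Ham (hL4 : 4 ≤ L) (J Δ : ℕ → ℝ) (h : ℝ)
    (hJ1 : J 1 = 1) (hJr : ∀ r : ℕ, 2 ≤ r → J r = 0) :
    SzT twoS L * Ham twoS L J Δ h = Ham twoS L J Δ h * SzT twoS L := by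
  rw [Ham_eq hL4 J Δ h hJ1 hJr, SzT_diag, mul_add, add_mul]
  congr 1
  · rw [Matrix.mul_smul, Matrix.smul_mul]
    congr 1
    apply diagonal_mul_comm
    intro x y hxy
    have hhop : ∃ j : Fin L, hop twoS L j x y ≠ 0 := by
      by_contra hall
      push_neg at hall
      apply hxy
      rw [Matrix.sum_apply]
      exact Finset.sum_eq_zero fun j _ => hall j
    obtain ⟨j, hj⟩ := hhop
    exact szdf_eq_of_confSum (hop_entry_confSum (by omega) j hj)
  · rw [Matrix.diagonal_mul_diagonal, Matrix.diagonal_mul_diagonal]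
    ext x y
    rw [Matrix.diagonal_apply, Matrix.diagonal_apply]
    by_cases hxy : x = y
    · rw [if_pos hxy, if_pos hxy, mul_comm]
    · rw [if_neg hxy, if_neg hxy]

lemma Utrl_comm_Ham (hL4 : 4 ≤ L) (J Δ : ℕ → ℝ) (h : ℝ)
    (hJ1 : J 1 = 1) (hJr : ∀ r : ℕ, 2 ≤ r → J r = 0) :
    Utrl twoS L * Ham twoS L J Δ h = Ham twoS L J Δ h * Utrl twoS L := by
  rw [Ham_eq hL4 J Δ h hJ1 hJr, mul_add, add_mul]
  congr 1
  · rw [Matrix.mul_smul, Matrix.smul_mul]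
    congr 1
    rw [Finset.mul_sum, Finset.sum_mul]
    rw [Finset.sum_congr rfl fun j _ => Utrl_mul_hop j]
    exact Fintype.sum_equiv (Equiv.subRight (1 : Fin L))
      (fun j => hop twoS L (j - 1) * Utrl twoS L)
      (fun j => hop twoS L j * Utrl twoS L)
      (fun j => rfl)
  · exact Utrl_mul_diagonal _ (dDiag_shift Δ h)

lemma Vsp_invariant (hL4 : 4 ≤ L) (J Δ : ℕ → ℝ) (h : ℝ)
    (hJ1 : J 1 = 1) (hJr : ∀ r : ℕ, 2 ≤ r → J r = 0) (M q : ℝ) :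
    ∀ v ∈ Vsp twoS L M q, (Ham twoS L J Δ h).mulVec v ∈ Vsp twoS L M q := by
  intro v hv
  rw [mem_Vsp_iff] at hv ⊢
  obtain ⟨h1, h2⟩ := hv
  constructor
  · rw [Matrix.mulVec_mulVec, SzT_comm_Ham hL4 J Δ h hJ1 hJr, ← Matrix.mulVec_mulVec,
      h1, Matrix.mulVec_smul]
  · rw [Matrix.mulVec_mulVec, Utrl_comm_Ham hL4 J Δ h hJ1 hJr, ← Matrix.mulVec_mulVec,
      h2, Matrix.mulVec_smul]

lemma eIdx_shfInv (hLe : Even L) (hL2 : 2 ≤ L) (x : Conf twoS L) :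
    ((eIdx (shfInv x) : ℕ) : ZMod 2)
      = ((eIdx x : ℕ) : ZMod 2) + ((confSum x : ℕ) : ZMod 2) := by
  have h1 : ((eIdx (shfInv x) : ℕ) : ZMod 2)
      = ∑ i : Fin L, ((i : ℕ) : ZMod 2) * ((x (i - 1) : ℕ) : ZMod 2) := by
    unfold eIdx shfInv
    push_cast
    rfl
  rw [h1]
  have h2 := Fintype.sum_equiv (Equiv.subRight (1 : Fin L))
    (fun i : Fin L => ((i : ℕ) : ZMod 2) * ((x (i - 1) : ℕ) : ZMod 2))
    (fun i : Fin L => (((i + 1 : Fin L) : ℕ) : ZMod 2) * ((x i : ℕ) : ZMod 2))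
    (fun i => by
      show ((i : ℕ) : ZMod 2) * ((x (i - 1) : ℕ) : ZMod 2)
        = ((((i - 1 : Fin L) + 1 : Fin L) : ℕ) : ZMod 2) * ((x (i - 1) : ℕ) : ZMod 2)
      rw [show ((i - 1 : Fin L) + 1 : Fin L) = i from by abel])
  rw [h2]
  have h3 : ∀ i : Fin L, ((((i + 1 : Fin L) : ℕ) : ZMod 2) * ((x i : ℕ) : ZMod 2))
      = ((i : ℕ) : ZMod 2) * ((x i : ℕ) : ZMod 2) + ((x i : ℕ) : ZMod 2) := by
    intro i
    rw [val_add_one_zmod2 hLe hL2]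
    ring
  rw [Finset.sum_congr rfl fun i _ => h3 i, Finset.sum_add_distrib]
  congr 1
  · unfold eIdx
    push_cast
    rfl
  · unfold confSum
    push_cast
    rfl

lemma expVal_PP {ψ : Conf twoS L → ℂ} {mL : ℕ} (hsupp : ∀ x, ψ x ≠ 0 → confSum x = mL)
    {j k : Fin L} (hjk : j ≠ k) :
    expVal twoS L (site twoS L j (SpMat twoS) * site twoS L k (SpMat twoS)) ψ = 0 := by
  rw [expVal_eq_sum]
  refine Finset.sum_eq_zero fun x _ => Finset.sum_eq_zero fun y _ => ?_
  by_cases hx : ψ x = 0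
  · rw [hx]; simp
  by_cases hy : ψ y = 0
  · rw [hy]; simp
  by_cases hA : (site twoS L j (SpMat twoS) * site twoS L k (SpMat twoS)) x y = 0
  · rw [hA]; simp
  obtain ⟨hoff, h1, h2⟩ := site_mul_site_entry hjk hA
  have hcs := confSum_PP hjk hoff (SpMat_ne h1) (SpMat_ne h2)
  rw [hsupp x hx, hsupp y hy] at hcs
  omega

lemma expVal_MM {ψ : Conf twoS L → ℂ} {mL : ℕ} (hsupp : ∀ x, ψ x ≠ 0 → confSum x = mL)
    {j k : Fin L} (hjk : j ≠ k) :
    expVal twoS L (site twoS L j (SmMat twoS) * site twoS L k (SmMat twoS)) ψ = 0 := by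
  rw [expVal_eq_sum]
  refine Finset.sum_eq_zero fun x _ => Finset.sum_eq_zero fun y _ => ?_
  by_cases hx : ψ x = 0
  · rw [hx]; simp
  by_cases hy : ψ y = 0
  · rw [hy]; simp
  by_cases hA : (site twoS L j (SmMat twoS) * site twoS L k (SmMat twoS)) x y = 0
  · rw [hA]; simp
  obtain ⟨hoff, h1, h2⟩ := site_mul_site_entry hjk hA
  have hcs := confSum_PP hjk (fun i hj' hk' => (hoff i hj' hk').symm)
    (by rw [← SmMat_ne h1]) (by rw [← SmMat_ne h2])
  rw [hsupp x hx, hsupp y hy] at hcs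
  omega

end Assembly


/-- Corollary to Theorem 6: for the nearest-neighbor chain
(`J(1) = 1`, `J(r) = 0` for `r ≥ 2`), in the sector `M = (S - m)L` the transverse
nearest-neighbor correlation of a lowest-energy state is nonpositive. -/
theorem transverse_correlation_nonpositive (twoS L : ℕ) [NeZero L]
    (hS : 0 < twoS) (hL4 : 4 ≤ L) (hLeven : Even L)
    (J Δ : ℕ → ℝ) (h : ℝ) (hJ1 : J 1 = 1) (hJr : ∀ r : ℕ, 2 ≤ r → J r = 0)
    (m : ℕ) (hm : m ≤ twoS) (q : ℝ) (hq : allowedQ L q)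
    (ψ : Conf twoS L → ℂ) (hmem : ψ ∈ Vsp twoS L ((spin twoS - (m : ℝ)) * L) q)
    (hunit : dotProduct (star ψ) ψ = 1)
    (hmin : (Ham twoS L J Δ h).mulVec ψ =
      ((En twoS L J Δ h ((spin twoS - (m : ℝ)) * L) q : ℝ) : ℂ) • ψ) :
    ∀ j : Fin L,
      (expVal twoS L (site twoS L j (SxMat twoS) * site twoS L (j + 1) (SxMat twoS))
        ψ).re ≤ 0 := by
  classical
  intro j
  have hL2 : 2 ≤ L := by omega
  obtain ⟨hSz, hU⟩ := mem_Vsp_iff.1 hmem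
  -- support of ψ
  have hszdf : ∀ x : Conf twoS L, ψ x ≠ 0 →
      szdf twoS L x = (((spin twoS - (m : ℝ)) * L : ℝ) : ℂ) := by
    intro x hx
    have h1 := congrFun hSz x
    rw [SzT_diag] at h1
    have h1' : szdf twoS L x * ψ x = (((spin twoS - (m : ℝ)) * L : ℝ) : ℂ) * ψ x := by
      rw [← Matrix.mulVec_diagonal (szdf twoS L) ψ x, h1, Pi.smul_apply, smul_eq_mul]
    exact mul_right_cancel₀ hx h1'
  have hsupp : ∀ x : Conf twoS L, ψ x ≠ 0 → confSum x = m * L := by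
    intro x hx
    have h2 := hszdf x hx
    rw [szdf_cast] at h2
    have h3 : (L : ℝ) * spin twoS - (confSum x : ℝ) = (spin twoS - (m : ℝ)) * L := by
      exact_mod_cast h2
    have h4 : (confSum x : ℝ) = (m : ℝ) * (L : ℝ) := by nlinarith [h3]
    exact_mod_cast h4
  -- the twisted vector φ = sgn · ψ
  have hφunit : dotProduct (star (fun x => sgn x * ψ x)) (fun x => sgn x * ψ x) = 1 := by
    rw [← hunit]
    unfold dotProduct
    refine Finset.sum_congr rfl fun x _ => ?_
    show star (sgn x * ψ x) * (sgn x * ψ x) = star (ψ x) * ψ x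
    rw [star_mul', show star (sgn x) = sgn x from sgn_conj x]
    linear_combination (star (ψ x) * ψ x) * sgn_sq x
  have hφmem : (fun x => sgn x * ψ x) ∈ Vsp twoS L ((spin twoS - (m : ℝ)) * L) q := by
    rw [mem_Vsp_iff]
    constructor
    · rw [SzT_diag]
      have hpt : ∀ x : Conf twoS L, szdf twoS L x * (sgn x * ψ x)
          = (((spin twoS - (m : ℝ)) * L : ℝ) : ℂ) * (sgn x * ψ x) := by
        intro x
        by_cases hx : ψ x = 0
        · rw [hx, mul_zero, mul_zero, mul_zero]
        · rw [hszdf x hx]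
      funext x
      rw [Matrix.mulVec_diagonal, Pi.smul_apply, smul_eq_mul]
      exact hpt x
    · rw [Utrl_mulVec]
      funext x
      show sgn (shfInv x) * ψ (shfInv x) = Complex.exp (Complex.I * q) * (sgn x * ψ x)
      have hψs : ψ (shfInv x) = Complex.exp (Complex.I * q) * ψ x := by
        have hUf := hU
        rw [Utrl_mulVec] at hUf
        have h5 := congrFun hUf x
        rw [Pi.smul_apply, smul_eq_mul] at h5
        exact h5
      by_cases hx : ψ x = 0
      · rw [hψs, hx, mul_zero, mul_zero, mul_zero, mul_zero]
      · have hpar : sgn (shfInv x) = sgn x := by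
          apply neg_one_pow_congr
          rw [eIdx_shfInv hLeven hL2 x, hsupp x hx]
          have hmL : ((m * L : ℕ) : ZMod 2) = 0 := by
            push_cast
            rw [even_cast_zmod2 hLeven, mul_zero]
          rw [hmL, add_zero]
        rw [hψs, hpar]
        ring
  -- variational inequality
  have hherm := Ham_isHermitian (twoS := twoS) (L := L) hL4 J Δ h hJ1 hJr
  have hinvV := Vsp_invariant (twoS := twoS) (L := L) hL4 J Δ h hJ1 hJr
    ((spin twoS - (m : ℝ)) * L) q
  have hvar := variational (Ham twoS L J Δ h) hherm
    (Vsp twoS L ((spin twoS - (m : ℝ)) * L) q) hinvV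
    (fun x => sgn x * ψ x) hφmem hφunit
  have hEnd : En twoS L J Δ h ((spin twoS - (m : ℝ)) * L) q
      = sInf {E : ℝ | ∃ ψ' ∈ Vsp twoS L ((spin twoS - (m : ℝ)) * L) q, ψ' ≠ 0 ∧
          (Ham twoS L J Δ h).mulVec ψ' = (E : ℂ) • ψ'} := rfl
  rw [← hEnd] at hvar
  -- expectation-value manipulations
  have hham := Ham_eq (twoS := twoS) (L := L) hL4 J Δ h hJ1 hJr
  have hψE : expVal twoS L (Ham twoS L J Δ h) ψ
      = ((En twoS L J Δ h ((spin twoS - (m : ℝ)) * L) q : ℝ) : ℂ) := by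
    unfold expVal
    rw [hmin, dotProduct_smul, smul_eq_mul, hunit, mul_one]
  have hsplit : ∀ χ : Conf twoS L → ℂ, expVal twoS L (Ham twoS L J Δ h) χ
      = 2⁻¹ * expVal twoS L (∑ j' : Fin L, hop twoS L j') χ
        + expVal twoS L (Matrix.diagonal (dDiag twoS L Δ h)) χ := by
    intro χ
    rw [hham, expVal_add, expVal_smul]
  have hTφ : expVal twoS L (∑ j' : Fin L, hop twoS L j') (fun x => sgn x * ψ x)
      = - expVal twoS L (∑ j' : Fin L, hop twoS L j') ψ := by
    rw [expVal_sum, expVal_sum,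
      Finset.sum_congr rfl fun j' _ =>
        expVal_twist (hop twoS L j') (-1) (sgn_hop hLeven hL2 j') ψ,
      ← Finset.mul_sum]
    ring
  have hDφ : expVal twoS L (Matrix.diagonal (dDiag twoS L Δ h)) (fun x => sgn x * ψ x)
      = expVal twoS L (Matrix.diagonal (dDiag twoS L Δ h)) ψ := by
    have hcond : ∀ x y : Conf twoS L,
        sgn x * (Matrix.diagonal (dDiag twoS L Δ h)) x y * sgn y
          = 1 * (Matrix.diagonal (dDiag twoS L Δ h)) x y := by
      intro x y
      by_cases hxy : x = y
      · subst hxy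
        rw [Matrix.diagonal_apply_eq]
        linear_combination (dDiag twoS L Δ h x) * sgn_sq x
      · rw [Matrix.diagonal_apply_ne _ hxy]
        ring
    rw [expVal_twist _ 1 hcond ψ, one_mul]
  have hφH : expVal twoS L (Ham twoS L J Δ h) (fun x => sgn x * ψ x)
      = ((En twoS L J Δ h ((spin twoS - (m : ℝ)) * L) q : ℝ) : ℂ)
        - expVal twoS L (∑ j' : Fin L, hop twoS L j') ψ := by
    have hkey : ((En twoS L J Δ h ((spin twoS - (m : ℝ)) * L) q : ℝ) : ℂ)
        = 2⁻¹ * expVal twoS L (∑ j' : Fin L, hop twoS L j') ψ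
          + expVal twoS L (Matrix.diagonal (dDiag twoS L Δ h)) ψ := by
      rw [← hψE, hsplit ψ]
    rw [hsplit _, hTφ, hDφ]
    linear_combination -hkey
  have hvardot : dotProduct (star (fun x => sgn x * ψ x))
      ((Ham twoS L J Δ h).mulVec (fun x => sgn x * ψ x))
      = expVal twoS L (Ham twoS L J Δ h) (fun x => sgn x * ψ x) := rfl
  rw [hvardot, hφH] at hvar
  have hTre : (expVal twoS L (∑ j' : Fin L, hop twoS L j') ψ).re ≤ 0 := by
    rw [Complex.sub_re, Complex.ofReal_re] at hvar
    linarith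
  -- translation invariance of the bond correlation
  have hEqne : Complex.exp (Complex.I * q) ≠ 0 := Complex.exp_ne_zero _
  have hUH : (Utrl twoS L)ᴴ.mulVec ψ = (Complex.exp (Complex.I * q))⁻¹ • ψ := by
    have h7 : (Utrl twoS L)ᴴ.mulVec (Complex.exp (Complex.I * q) • ψ) = ψ := by
      rw [← hU, Matrix.mulVec_mulVec, Utrl_conjT_mul, Matrix.one_mulVec]
    rw [Matrix.mulVec_smul] at h7
    calc (Utrl twoS L)ᴴ.mulVec ψ
        = (Complex.exp (Complex.I * q))⁻¹ •
            (Complex.exp (Complex.I * q) • (Utrl twoS L)ᴴ.mulVec ψ) := by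
          rw [smul_smul, inv_mul_cancel₀ hEqne, one_smul]
      _ = (Complex.exp (Complex.I * q))⁻¹ • ψ := by rw [h7]
  have hconj : (starRingEnd ℂ) ((Complex.exp (Complex.I * q))⁻¹)
      = Complex.exp (Complex.I * q) := by
    rw [← Complex.exp_neg, ← Complex.exp_conj]
    congr 1
    simp [Complex.conj_ofReal]
  have hshift : ∀ j' : Fin L, expVal twoS L (hop twoS L (j' - 1)) ψ
      = expVal twoS L (hop twoS L j') ψ := by
    intro j'
    apply mul_right_cancel₀ hEqne
    calc expVal twoS L (hop twoS L (j' - 1)) ψ * Complex.exp (Complex.I * q)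
        = dotProduct (star ψ)
            ((hop twoS L (j' - 1)).mulVec (Complex.exp (Complex.I * q) • ψ)) := by
          rw [Matrix.mulVec_smul, dotProduct_smul, smul_eq_mul]
          unfold expVal
          ring
      _ = dotProduct (star ψ) ((hop twoS L (j' - 1) * Utrl twoS L).mulVec ψ) := by
          rw [← hU, Matrix.mulVec_mulVec]
      _ = dotProduct (star ψ) ((Utrl twoS L * hop twoS L j').mulVec ψ) := by
          rw [← Utrl_mul_hop]
      _ = dotProduct (star ψ) ((Utrl twoS L).mulVec ((hop twoS L j').mulVec ψ)) := by
          rw [Matrix.mulVec_mulVec]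
      _ = dotProduct (star ((Utrl twoS L)ᴴ.mulVec ψ)) ((hop twoS L j').mulVec ψ) := by
          rw [Matrix.dotProduct_mulVec]
          congr 1
          have h8 := Matrix.star_mulVec ((Utrl twoS L)ᴴ) ψ
          rw [Matrix.conjTranspose_conjTranspose] at h8
          rw [h8]
      _ = expVal twoS L (hop twoS L j') ψ * Complex.exp (Complex.I * q) := by
          rw [hUH, star_smul, smul_dotProduct,
            show (star ((Complex.exp (Complex.I * q))⁻¹))
              = (starRingEnd ℂ) ((Complex.exp (Complex.I * q))⁻¹) from rfl, hconj]
          unfold expVal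
          rw [smul_eq_mul]
          ring
  have hconst : ∀ j' : Fin L, expVal twoS L (hop twoS L j') ψ
      = expVal twoS L (hop twoS L 0) ψ := by
    have hstep : ∀ j' : Fin L, expVal twoS L (hop twoS L j') ψ
        = expVal twoS L (hop twoS L (j' + 1)) ψ := by
      intro j'
      have h9 := hshift (j' + 1)
      rwa [add_sub_cancel_right] at h9
    have hnat : ∀ n : ℕ, expVal twoS L (hop twoS L ((n : ℕ) : Fin L)) ψ
        = expVal twoS L (hop twoS L 0) ψ := by
      intro n
      induction n with
      | zero => rw [Nat.cast_zero]
      | succ k ih => rw [Nat.cast_add, Nat.cast_one, ← hstep]; exact ih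
    intro j'
    have h10 := hnat (j' : ℕ)
    rwa [Fin.cast_val_eq_self] at h10
  have hTsum : expVal twoS L (∑ j' : Fin L, hop twoS L j') ψ
      = (L : ℂ) * expVal twoS L (hop twoS L 0) ψ := by
    rw [expVal_sum, Finset.sum_congr rfl fun j' _ => hconst j', Finset.sum_const,
      Finset.card_univ, Fintype.card_fin, nsmul_eq_mul]
  have hhop0 : (expVal twoS L (hop twoS L 0) ψ).re ≤ 0 := by
    have h12 : (expVal twoS L (∑ j' : Fin L, hop twoS L j') ψ).re
        = (L : ℝ) * (expVal twoS L (hop twoS L 0) ψ).re := by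
      rw [hTsum, Complex.mul_re]
      simp
    have h11 : (L : ℝ) * (expVal twoS L (hop twoS L 0) ψ).re ≤ 0 := by
      rw [← h12]; exact hTre
    have hLpos : (0 : ℝ) < L := by exact_mod_cast (by omega : 0 < L)
    by_contra hpos
    push_neg at hpos
    nlinarith
  have hhopj : (expVal twoS L (hop twoS L j) ψ).re ≤ 0 := by
    rw [hconst j]; exact hhop0
  -- decompose SxSx
  have hjn : j ≠ j + 1 := fin_add_one_ne hL2 j
  have hSx : site twoS L j (SxMat twoS) * site twoS L (j + 1) (SxMat twoS)
      = (4⁻¹ : ℂ) • (site twoS L j (SpMat twoS) * site twoS L (j + 1) (SpMat twoS)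
        + site twoS L j (SmMat twoS) * site twoS L (j + 1) (SmMat twoS)
        + hop twoS L j) := by
    rw [show SxMat twoS = ((2 : ℂ))⁻¹ • (SpMat twoS + SmMat twoS) from rfl,
      site_smul, site_smul, Matrix.smul_mul, Matrix.mul_smul, smul_smul,
      site_add, site_add, add_mul, mul_add, mul_add, hop,
      show ((2 : ℂ))⁻¹ * ((2 : ℂ))⁻¹ = (4⁻¹ : ℂ) from by norm_num]
    congr 1
    abel
  have hPP0 : expVal twoS L
      (site twoS L j (SpMat twoS) * site twoS L (j + 1) (SpMat twoS)) ψ = 0 :=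
    expVal_PP hsupp hjn
  have hMM0 : expVal twoS L
      (site twoS L j (SmMat twoS) * site twoS L (j + 1) (SmMat twoS)) ψ = 0 :=
    expVal_MM hsupp hjn
  rw [hSx, expVal_smul, expVal_add, expVal_add, hPP0, hMM0, zero_add, zero_add,
    Complex.mul_re]
  have h4re : ((4⁻¹ : ℂ)).re = 4⁻¹ := by norm_num
  have h4im : ((4⁻¹ : ℂ)).im = 0 := by norm_num
  rw [h4re, h4im]
  nlinarith [hhopj]


end LSM
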